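/- The function ψ(α) = 2α^3 - 27α^2 - 9α + 2(α^2 + 6)^{3/2} is strictly increasing on the interval (α', ∞), where α' = (48 + √264)/12, and ψ(5) < 0; hence there exists a unique α_cr > 5 with ψ(α_cr) = 0. -/

import Mathlib

noncomputable def psiF : ℝ → ℝ := fun α : ℝ => 2*α^3 - 27*α^2 - 9*α + 2*(α^2+6)^((3:ℝ)/2)

lemma psiF_hasDeriv (x : ℝ) :
    HasDerivAt psiF (6*x^2 - 54*x - 9 + 6*x*Real.sqrt (x^2+6)) x := by
  have hg : HasDerivAt (fun α : ℝ => α^2+6) (2*x) x := by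
    simpa using ((hasDerivAt_pow 2 x).add_const 6)
  have hne : x^2 + 6 ≠ 0 := by positivity
  have hr : HasDerivAt (fun y : ℝ => y ^ ((3:ℝ)/2))
      (((3:ℝ)/2) * (x^2+6) ^ ((3:ℝ)/2 - 1)) (x^2+6) :=
    Real.hasDerivAt_rpow_const (Or.inl hne)
  have hcomp := hr.comp x hg
  have hpoly : HasDerivAt (fun α : ℝ => 2*α^3 - 27*α^2 - 9*α)
      (6*x^2 - 54*x - 9) x := by
    have h1 := (hasDerivAt_pow 3 x).const_mul (2:ℝ)
    have h2 := (hasDerivAt_pow 2 x).const_mul (27:ℝ)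
    have h3 := (hasDerivAt_id x).const_mul (9:ℝ)
    have := (h1.sub h2).sub h3
    refine this.congr_deriv ?_
    ring
  have := hpoly.add (hcomp.const_mul 2)
  refine this.congr_deriv ?_
  have hexp : ((3:ℝ)/2 - 1) = (1:ℝ)/2 := by norm_num
  rw [hexp, ← Real.sqrt_eq_rpow]
  ring

lemma psiF_cont : Continuous psiF := by
  have h : Differentiable ℝ psiF := fun x => (psiF_hasDeriv x).differentiableAt
  exact h.continuous

lemma psiF_mono : StrictMonoOn psiF (Set.Ici (5:ℝ)) := by
  apply strictMonoOn_of_deriv_pos (convex_Ici 5) psiF_cont.continuousOn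
  intro x hx
  rw [interior_Ici] at hx
  rw [(psiF_hasDeriv x).deriv]
  have hx5 : (5:ℝ) < x := hx
  have hs : x ≤ Real.sqrt (x^2+6) := by
    nlinarith [Real.sq_sqrt (show (0:ℝ) ≤ x^2+6 by positivity), Real.sqrt_nonneg (x^2+6)]
  nlinarith

lemma psi5 : psiF 5 < 0 := by
  have h31 : ((5:ℝ)^2+6) = 31 := by norm_num
  have hcube : (31:ℝ) ^ ((3:ℝ)/2) = Real.sqrt 31 ^ 3 := by
    rw [show ((3:ℝ)/2) = (1/2 : ℝ) * (3:ℕ) by norm_num,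
      Real.rpow_mul (by norm_num), Real.rpow_natCast, ← Real.sqrt_eq_rpow]
  have hs := Real.sq_sqrt (show (0:ℝ) ≤ 31 by norm_num)
  have hnn := Real.sqrt_nonneg (31:ℝ)
  have hlt : Real.sqrt 31 ^ 3 < 235 := by nlinarith [sq_nonneg (Real.sqrt 31 - 5.6)]
  unfold psiF
  rw [h31, hcube]
  nlinarith

theorem stmt_7 :
    StrictMonoOn (fun α : ℝ => 2*α^3 - 27*α^2 - 9*α + 2*(α^2+6)^((3:ℝ)/2))
      (Set.Ioi ((48 + Real.sqrt 264)/12)) ∧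
    (2*(5:ℝ)^3 - 27*5^2 - 9*5 + 2*((5:ℝ)^2+6)^((3:ℝ)/2) < 0) ∧
    (∃! αcr : ℝ, αcr > 5 ∧ 2*αcr^3 - 27*αcr^2 - 9*αcr + 2*(αcr^2+6)^((3:ℝ)/2) = 0) := by
  have hsub : Set.Ioi ((48 + Real.sqrt 264)/12) ⊆ Set.Ici (5:ℝ) := by
    intro x hx
    have h264 : (12:ℝ) < Real.sqrt 264 := by
      rw [show (12:ℝ) = Real.sqrt 144 by rw [show (144:ℝ) = 12^2 by norm_num, Real.sqrt_sq] ; norm_num]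
      exact Real.sqrt_lt_sqrt (by norm_num) (by norm_num)
    have : (5:ℝ) < (48 + Real.sqrt 264)/12 := by linarith
    exact le_of_lt (lt_trans this hx)
  refine ⟨psiF_mono.mono hsub, psi5, ?_⟩
  -- existence via IVT on [5, 14]
  have h14 : (0:ℝ) < psiF 14 := by
    unfold psiF
    have : (0:ℝ) < ((14:ℝ)^2+6) ^ ((3:ℝ)/2) := Real.rpow_pos_of_pos (by norm_num) _
    nlinarith
  have hIVT := intermediate_value_Ioo (by norm_num : (5:ℝ) ≤ 14) psiF_cont.continuousOn
  have h0mem : (0:ℝ) ∈ Set.Ioo (psiF 5) (psiF 14) := ⟨psi5, h14⟩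
  obtain ⟨c, hc, hc0⟩ := hIVT h0mem
  refine ⟨c, ⟨hc.1, hc0⟩, ?_⟩
  rintro y ⟨hy5, hy0⟩
  exact psiF_mono.injOn (le_of_lt hy5) (le_of_lt hc.1) (by rw [show psiF y = _ from rfl]; exact hy0.trans hc0.symm)
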